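/- Let n ≥ 5 be odd and let P consist of the n vertices of a regular n-gon together with its center C. For any vertex V, the number n(V,C) of lines spanned by pairs of the other n−1 points separating V from C satisfies n(V,C) ≡ ⌊n/4⌋ (mod 2). In particular n(V,C) is odd if and only if n ≡ 5 or 7 (mod 8). -/

import Mathlib

open scoped Classical

noncomputable section

/-- Orientation determinant of two vectors in the plane. -/
def det2 (u v : ℝ × ℝ) : ℝ := u.1 * v.2 - u.2 * v.1

/-- The line through `A` and `B` separates the points `P` and `Q`
(they lie in distinct open half-planes determined by the line). -/
def SepLine (A B P Q : ℝ × ℝ) : Prop :=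
  det2 (B - A) (P - A) * det2 (B - A) (Q - A) < 0

/-- A finite planar point set is a generic configuration if no three of its
points are collinear. -/
def Generic (C : Finset (ℝ × ℝ)) : Prop :=
  ∀ a ∈ C, ∀ b ∈ C, ∀ c ∈ C, a ≠ b → a ≠ c → b ≠ c →
    ¬ Collinear ℝ ({a, b, c} : Set (ℝ × ℝ))

/-- `nsep C P Q` is the number of lines spanned by (unordered) pairs of points of
`C \ {P,Q}` that separate `P` from `Q`. -/
def nsep (C : Finset (ℝ × ℝ)) (P Q : ℝ × ℝ) : ℕ :=
  (((C \ {P, Q}).powersetCard 2).filter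
    (fun s => ∃ A ∈ s, ∃ B ∈ s, A ≠ B ∧ SepLine A B P Q)).card

/-- The Orchard relation: `P ∼ Q` iff `n(P,Q) ≡ n - 3 (mod 2)` where `n = |C|`. -/
def Orchard (C : Finset (ℝ × ℝ)) (P Q : ℝ × ℝ) : Prop :=
  (nsep C P Q : ℤ) ≡ (C.card : ℤ) - 3 [ZMOD 2]

/-- A configuration is monochromatic if all its points are Orchard-equivalent. -/
def Mono (C : Finset (ℝ × ℝ)) : Prop :=
  ∀ P ∈ C, ∀ Q ∈ C, P ≠ Q → Orchard C P Q

/-- A configuration is in convex position if each of its points is a vertex of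
the convex hull. -/
def ConvexPos (C : Finset (ℝ × ℝ)) : Prop :=
  ∀ P ∈ C, P ∉ convexHull ℝ ((C : Set (ℝ × ℝ)) \ {P})

/-- The `k`-th vertex of the regular `n`-gon inscribed in the unit circle
centered at the origin. -/
def vtx (n : ℕ) (k : Fin n) : ℝ × ℝ :=
  (Real.cos (2 * Real.pi * k / n), Real.sin (2 * Real.pi * k / n))

/-- The configuration consisting of the vertices of the regular `n`-gon together
with its barycenter (the origin). -/
def ngonWithCenter (n : ℕ) : Finset (ℝ × ℝ) :=
  insert ((0, 0) : ℝ × ℝ) (Finset.image (vtx n) Finset.univ)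

open Fin.NatCast Fin.CommRing

section AuxLemmas
open Real


lemma vtx_natCast (n : ℕ) [NeZero n] (a : ℕ) :
    vtx n ((a : Fin n)) = (Real.cos (2*Real.pi*a/n), Real.sin (2*Real.pi*a/n)) := by
  have hn0 : (n:ℝ) ≠ 0 := Nat.cast_ne_zero.2 (NeZero.ne n)
  have hval : (((a : Fin n) : ℕ) : ℝ) = (a:ℝ) - (n:ℝ) * ((a / n : ℕ) : ℝ) := by
    have h := Nat.mod_add_div a n
    have h2 : ((a % n : ℕ) : ℝ) + (n:ℝ)*((a/n :ℕ):ℝ) = (a:ℝ) := by exact_mod_cast congrArg (Nat.cast : ℕ → ℝ) h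
    rw [Fin.val_natCast]; linarith
  show ((Real.cos (2 * Real.pi * (((a : Fin n) : ℕ):ℝ) / n), Real.sin (2 * Real.pi * (((a : Fin n):ℕ):ℝ) / n)) : ℝ × ℝ) = _
  have harg : 2*Real.pi*(((a : Fin n) : ℕ) : ℝ)/n = 2*Real.pi*a/n + (-(a/n :ℕ) : ℤ) * (2*Real.pi) := by
    have hc : ((-((a/n : ℕ) : ℤ) : ℤ) : ℝ) = -((a/n : ℕ) : ℝ) := by rw [Int.cast_neg, Int.cast_natCast]
    rw [hval, hc]; field_simp; ring
  rw [harg, Real.cos_add_int_mul_two_pi, Real.sin_add_int_mul_two_pi]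

lemma vtx_inj {n : ℕ} [NeZero n] {i j : Fin n} (h : vtx n i = vtx n j) : i = j := by
  have hnp : 0 < n := Nat.pos_of_ne_zero (NeZero.ne n)
  have hn0 : (0:ℝ) < n := by exact_mod_cast hnp
  have hc : Real.cos (2*Real.pi*(i:ℕ)/n) = Real.cos (2*Real.pi*(j:ℕ)/n) := congrArg Prod.fst h
  have hs : Real.sin (2*Real.pi*(i:ℕ)/n) = Real.sin (2*Real.pi*(j:ℕ)/n) := congrArg Prod.snd h
  have h1 : Real.cos (2*Real.pi*(i:ℕ)/n - 2*Real.pi*(j:ℕ)/n) = 1 := by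
    rw [Real.cos_sub, hc, hs]
    have := Real.sin_sq_add_cos_sq (2*Real.pi*(j:ℕ)/n)
    nlinarith [this]
  obtain ⟨z, hz⟩ := (Real.cos_eq_one_iff _).1 h1
  have hpi := Real.pi_pos
  have hz2 : (2*Real.pi) * ((z:ℝ) * n) = (2*Real.pi) * ((i:ℕ) - (j:ℕ)) := by
    field_simp at hz ⊢
    nlinarith [hz]
  have hz3 : (z:ℝ) * n = ((i:ℕ):ℝ) - ((j:ℕ):ℝ) := by
    have h2 : (2*Real.pi) ≠ 0 := by positivity
    exact mul_left_cancel₀ h2 hz2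
  have hz4 : z * n = (i:ℕ) - (j:ℤ) := by exact_mod_cast hz3
  have hi := i.isLt
  have hj := j.isLt
  have hz0 : z = 0 := by
    rcases lt_trichotomy z 0 with h' | h' | h'
    · exfalso; nlinarith [hz4, (by exact_mod_cast hi : (i:ℤ) < n), (by omega : z ≤ -1),
        (by exact_mod_cast hj : (j:ℤ) < n), (by positivity : (0:ℤ) ≤ (j:ℤ))]
    · exact h'
    · exfalso; nlinarith [hz4, (by exact_mod_cast hi : (i:ℤ) < n), (by omega : 1 ≤ z),
        (by exact_mod_cast hj : (j:ℤ) < n), (by positivity : (0:ℤ) ≤ (i:ℤ))]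
  rw [hz0] at hz4
  have : (i:ℕ) = (j:ℕ) := by omega
  exact Fin.ext this

lemma center_ne_vtx {n : ℕ} (j : Fin n) : ((0,0) : ℝ × ℝ) ≠ vtx n j := by
  intro h
  have hc : (0:ℝ) = Real.cos (2*Real.pi*(j:ℕ)/n) := congrArg Prod.fst h
  have hs : (0:ℝ) = Real.sin (2*Real.pi*(j:ℕ)/n) := congrArg Prod.snd h
  have := Real.sin_sq_add_cos_sq (2*Real.pi*(j:ℕ)/n)
  nlinarith

lemma det2_three (α β δ : ℝ) :
    det2 ((Real.cos β, Real.sin β) - (Real.cos α, Real.sin α))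
      ((Real.cos δ, Real.sin δ) - (Real.cos α, Real.sin α))
      = Real.sin (β - α) + Real.sin (δ - β) + Real.sin (α - δ) := by
  simp only [det2, Prod.mk_sub_mk, Real.sin_sub]
  ring

lemma det2_center (α β : ℝ) :
    det2 ((Real.cos β, Real.sin β) - (Real.cos α, Real.sin α))
      (((0,0) : ℝ × ℝ) - (Real.cos α, Real.sin α)) = Real.sin (β - α) := by
  simp only [det2, Prod.mk_sub_mk, Real.sin_sub]
  ring

lemma sepline_swap (A B P Q : ℝ × ℝ) : SepLine A B P Q ↔ SepLine B A P Q := by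
  have h : det2 (A - B) (P - B) * det2 (A - B) (Q - B)
      = det2 (B - A) (P - A) * det2 (B - A) (Q - A) := by
    simp only [det2, Prod.fst_sub, Prod.snd_sub]
    ring
  rw [SepLine, SepLine, h]

set_option maxHeartbeats 1000000 in
lemma sep_iff' (n : ℕ) (hodd : Odd n) (hnp : 0 < n) (K u v : ℕ)
    (hu : 1 ≤ u) (huv : u < v) (hv : v < n) :
    SepLine (Real.cos (2*Real.pi*(K+u)/n), Real.sin (2*Real.pi*(K+u)/n))
      (Real.cos (2*Real.pi*(K+v)/n), Real.sin (2*Real.pi*(K+v)/n))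
      (Real.cos (2*Real.pi*K/n), Real.sin (2*Real.pi*K/n)) ((0,0) : ℝ × ℝ)
    ↔ n < 2*(v - u) := by
  have hn0 : (0:ℝ) < n := by exact_mod_cast hnp
  have hpi := Real.pi_pos
  set γ : ℝ := 2*Real.pi*K/n with hγ
  set x : ℝ := Real.pi*u/n with hx
  set y : ℝ := Real.pi*v/n with hy
  have hA : 2*Real.pi*((K:ℝ)+u)/n = γ + 2*x := by rw [hγ, hx]; field_simp
  have hB : 2*Real.pi*((K:ℝ)+v)/n = γ + 2*y := by rw [hγ, hy]; field_simp
  clear_value γ x y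
  rw [SepLine, hA, hB, det2_three, det2_center]
  have e1 : (γ + 2*y) - (γ + 2*x) = 2*(y-x) := by ring
  have e2 : γ - (γ + 2*y) = -(2*y) := by ring
  have e3 : (γ + 2*x) - γ = 2*x := by ring
  rw [e1, e2, e3]
  have h1 : Real.sin (2*(y-x)) + Real.sin (-(2*y)) + Real.sin (2*x)
      = 4 * Real.sin x * Real.sin y * Real.sin (y-x) := by
    rw [Real.sin_neg, Real.sin_two_mul, Real.sin_two_mul, Real.sin_two_mul,
      Real.sin_sub, Real.cos_sub]
    linear_combination 2*Real.sin y*Real.cos y*(Real.sin_sq_add_cos_sq x)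
      - 2*Real.sin x*Real.cos x*(Real.sin_sq_add_cos_sq y)
  have h2 : Real.sin (2*(y-x)) = 2 * Real.sin (y-x) * Real.cos (y-x) := Real.sin_two_mul _
  rw [h1, h2]
  -- positivity facts
  have hxpos : 0 < x := by
    rw [hx]
    apply div_pos (mul_pos hpi _) hn0
    exact_mod_cast hu
  have hxlt : x < Real.pi := by
    rw [hx, div_lt_iff₀ hn0]
    have : (u:ℝ) < n := by exact_mod_cast lt_trans huv hv
    nlinarith
  have hypos : 0 < y := by
    rw [hy]
    apply div_pos (mul_pos hpi _) hn0
    have hv0 : 0 < v := by omega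
    exact_mod_cast hv0
  have hylt : y < Real.pi := by
    rw [hy, div_lt_iff₀ hn0]
    have : (v:ℝ) < n := by exact_mod_cast hv
    nlinarith
  have hyx : 0 < y - x := by
    rw [hx, hy]
    have : (u:ℝ) < v := by exact_mod_cast huv
    rw [sub_pos, div_lt_div_iff₀ hn0 hn0]
    nlinarith [mul_pos (mul_pos hpi hn0) (sub_pos.2 this)]
  have hyxlt : y - x < Real.pi := by linarith
  have hsx : 0 < Real.sin x := Real.sin_pos_of_pos_of_lt_pi hxpos hxlt
  have hsy : 0 < Real.sin y := Real.sin_pos_of_pos_of_lt_pi hypos hylt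
  have hs : 0 < Real.sin (y-x) := Real.sin_pos_of_pos_of_lt_pi hyx hyxlt
  have hyxval : y - x = Real.pi * ((v:ℝ) - u) / n := by rw [hx, hy]; ring
  constructor
  · intro hlt
    by_contra hcon
    push_neg at hcon
    -- then 2*(v-u) < n since n is odd
    have hne : 2*(v-u) ≠ n := by
      intro he; exact (Nat.not_odd_iff_even.2 ⟨v-u, by omega⟩) (he ▸ hodd)
    have h2vu : 2*(v-u) < n := by omega
    have hcos : 0 < Real.cos (y-x) := by
      apply Real.cos_pos_of_mem_Ioo
      constructor
      · linarith
      · rw [hyxval, div_lt_iff₀ hn0]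
        have : 2*((v:ℝ) - u) < n := by
          have : ((2*(v-u) : ℕ):ℝ) < n := by exact_mod_cast h2vu
          push_cast [Nat.cast_sub (le_of_lt huv)] at this
          linarith
        nlinarith
    have h1 : 0 < Real.sin x*Real.sin y*(Real.sin (y-x)*Real.sin (y-x)) :=
      mul_pos (mul_pos hsx hsy) (mul_pos hs hs)
    have e : (4*Real.sin x*Real.sin y*Real.sin (y-x)) * (2*Real.sin (y-x)*Real.cos (y-x))
        = 8 * ((Real.sin x*Real.sin y*(Real.sin (y-x)*Real.sin (y-x))) * Real.cos (y-x)) := by ring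
    have := mul_pos h1 hcos
    rw [e] at hlt
    linarith
  · intro hlt
    have hcos : Real.cos (y-x) < 0 := by
      apply Real.cos_neg_of_pi_div_two_lt_of_lt
      · rw [hyxval, lt_div_iff₀ hn0]
        have : (n:ℝ) < 2*((v:ℝ) - u) := by
          have : (n:ℝ) < ((2*(v-u) : ℕ):ℝ) := by exact_mod_cast hlt
          push_cast [Nat.cast_sub (le_of_lt huv)] at this
          linarith
        nlinarith
      · linarith
    have h1 : 0 < Real.sin x*Real.sin y*(Real.sin (y-x)*Real.sin (y-x)) :=
      mul_pos (mul_pos hsx hsy) (mul_pos hs hs)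
    have e : (4*Real.sin x*Real.sin y*Real.sin (y-x)) * (2*Real.sin (y-x)*Real.cos (y-x))
        = 8 * ((Real.sin x*Real.sin y*(Real.sin (y-x)*Real.sin (y-x))) * Real.cos (y-x)) := by ring
    have := mul_neg_of_pos_of_neg h1 hcos
    rw [e]
    linarith


lemma finset_pair_eq {α : Type*} [DecidableEq α] {a b c d : α}
    (h : ({a,b} : Finset α) = {c,d}) : (a = c ∧ b = d) ∨ (a = d ∧ b = c) := by
  have ha : a = c ∨ a = d := by
    have : a ∈ ({c,d} : Finset α) := h ▸ (by simp : a ∈ ({a,b} : Finset α))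
    simpa using this
  have hb : b = c ∨ b = d := by
    have : b ∈ ({c,d} : Finset α) := h ▸ (by simp : b ∈ ({a,b} : Finset α))
    simpa using this
  have hc : c = a ∨ c = b := by
    have : c ∈ ({a,b} : Finset α) := h ▸ (by simp : c ∈ ({c,d} : Finset α))
    simpa using this
  have hd : d = a ∨ d = b := by
    have : d ∈ ({a,b} : Finset α) := h ▸ (by simp : d ∈ ({c,d} : Finset α))
    simpa using this
  rcases ha with h1|h1 <;> rcases hb with h2|h2 <;> rcases hc with h3|h3 <;>
    rcases hd with h4|h4 <;> subst_vars <;> tauto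

lemma addmod_inj {n : ℕ} (K a b : ℕ) (hK : K < n) (ha : a < n) (hb : b < n)
    (h : (K+a) % n = (K+b) % n) : a = b := by
  rcases lt_or_ge (K+a) n with h1 | h1 <;> rcases lt_or_ge (K+b) n with h2 | h2
  · rw [Nat.mod_eq_of_lt h1, Nat.mod_eq_of_lt h2] at h; omega
  · rw [Nat.mod_eq_of_lt h1, Nat.mod_eq_sub_mod h2, Nat.mod_eq_of_lt (by omega)] at h; omega
  · rw [Nat.mod_eq_sub_mod h1, Nat.mod_eq_of_lt (by omega), Nat.mod_eq_of_lt h2] at h; omega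
  · rw [Nat.mod_eq_sub_mod h1, Nat.mod_eq_of_lt (by omega), Nat.mod_eq_sub_mod h2,
      Nat.mod_eq_of_lt (by omega)] at h; omega

lemma addmod_ne {n : ℕ} (K u : ℕ) (hK : K < n) (hu : 1 ≤ u) (hun : u < n) :
    (K+u) % n ≠ K := by
  rcases lt_or_ge (K+u) n with h1 | h1
  · rw [Nat.mod_eq_of_lt h1]; omega
  · rw [Nat.mod_eq_sub_mod h1, Nat.mod_eq_of_lt (by omega)]; omega

end AuxLemmas

set_option maxHeartbeats 2000000

/-- For an odd `n ≥ 5`, and the configuration of the `n` vertices of a regular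
`n`-gon together with its center, the number of separating lines between any
vertex and the center is congruent to `⌊n/4⌋ (mod 2)`; in particular it is odd
iff `n ≡ 5, 7 (mod 8)`. -/
theorem vertex_center_separating_lines (n : ℕ) [NeZero n] (hn : 5 ≤ n) (hodd : Odd n)
    (k : Fin n) :
    (nsep (ngonWithCenter n) (vtx n k) (0, 0) : ℤ) ≡ ((n / 4 : ℕ) : ℤ) [ZMOD 2] ∧
    (Odd (nsep (ngonWithCenter n) (vtx n k) (0, 0)) ↔ n % 8 = 5 ∨ n % 8 = 7) := by
  have hnp : 0 < n := Nat.pos_of_ne_zero (NeZero.ne n)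
  set m := n / 2 with hmdef
  have hnm : n = 2*m + 1 := by
    have := Nat.odd_iff.1 hodd
    omega
  have hm2 : 2 ≤ m := by omega
  -- the set of points other than the vertex and the center
  have hD : ngonWithCenter n \ {vtx n k, (0,0)} = Finset.image (vtx n) (Finset.univ.erase k) := by
    ext p
    constructor
    · intro hp
      rw [Finset.mem_sdiff] at hp
      obtain ⟨h1, h2⟩ := hp
      rw [ngonWithCenter, Finset.mem_insert] at h1
      simp only [Finset.mem_insert, Finset.mem_singleton] at h2
      push_neg at h2
      rcases h1 with h1 | h1
      · exact absurd h1 h2.2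
      · rw [Finset.mem_image] at h1
        obtain ⟨j, -, rfl⟩ := h1
        rw [Finset.mem_image]
        refine ⟨j, ?_, rfl⟩
        rw [Finset.mem_erase]
        exact ⟨fun hjk => h2.1 (by rw [hjk]), Finset.mem_univ j⟩
    · intro hp
      rw [Finset.mem_image] at hp
      obtain ⟨j, hj, rfl⟩ := hp
      rw [Finset.mem_erase] at hj
      rw [Finset.mem_sdiff, ngonWithCenter, Finset.mem_insert]
      refine ⟨Or.inr (Finset.mem_image_of_mem _ (Finset.mem_univ j)), ?_⟩
      simp only [Finset.mem_insert, Finset.mem_singleton]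
      push_neg
      exact ⟨fun h => hj.1 (vtx_inj h), fun h => center_ne_vtx j h.symm⟩
  -- the separation criterion, in terms of indices
  have sep_char : ∀ u v : ℕ, 1 ≤ u → u < v → v < n →
      (SepLine (vtx n (((k:ℕ) + u : ℕ) : Fin n)) (vtx n (((k:ℕ) + v : ℕ) : Fin n))
        (vtx n k) (0,0) ↔ n < 2*(v - u)) := by
    intro u v hu huv hv
    rw [vtx_natCast, vtx_natCast]
    have hk : vtx n k = (Real.cos (2*Real.pi*(k:ℕ)/n), Real.sin (2*Real.pi*(k:ℕ)/n)) := rfl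
    rw [hk]
    have h := sep_iff' n hodd hnp (k:ℕ) u v hu huv hv
    have e1 : ((((k:ℕ) + u : ℕ)) : ℝ) = ((k:ℕ):ℝ) + (u:ℝ) := by push_cast; ring
    have e2 : ((((k:ℕ) + v : ℕ)) : ℝ) = ((k:ℕ):ℝ) + (v:ℝ) := by push_cast; ring
    rw [e1, e2]
    exact h
  -- the indexing map is injective and avoids k
  have idx_lt : ∀ j : Fin n, (j:ℕ) < n := fun j => j.isLt
  have idx_ne : ∀ u : ℕ, 1 ≤ u → u < n → (((k:ℕ) + u : ℕ) : Fin n) ≠ k := by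
    intro u hu hun h
    have := congrArg Fin.val h
    rw [Fin.val_natCast] at this
    exact addmod_ne (k:ℕ) u (idx_lt k) hu hun this
  have idx_inj : ∀ u u' : ℕ, u < n → u' < n →
      (((k:ℕ) + u : ℕ) : Fin n) = (((k:ℕ) + u' : ℕ) : Fin n) → u = u' := by
    intro u u' hu hu' h
    have := congrArg Fin.val h
    rw [Fin.val_natCast, Fin.val_natCast] at this
    exact addmod_inj (k:ℕ) u u' (idx_lt k) hu hu' this
  -- the finite set of index pairs
  set E : Finset (ℕ × ℕ) := (Finset.range n ×ˢ Finset.range n).filter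
    (fun p => 1 ≤ p.1 ∧ p.1 < p.2 ∧ n < 2*(p.2 - p.1)) with hEdef
  have hmemE : ∀ p : ℕ × ℕ, p ∈ E ↔
      p.1 < n ∧ p.2 < n ∧ 1 ≤ p.1 ∧ p.1 < p.2 ∧ n < 2*(p.2 - p.1) := by
    intro p
    rw [hEdef, Finset.mem_filter, Finset.mem_product, Finset.mem_range, Finset.mem_range]
    tauto
  -- main bijection
  have hcard : nsep (ngonWithCenter n) (vtx n k) (0,0) = E.card := by
    rw [nsep, hD]
    refine (Finset.card_bij
      (fun p _ => ({vtx n (((k:ℕ) + p.1 : ℕ) : Fin n), vtx n (((k:ℕ) + p.2 : ℕ) : Fin n)}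
        : Finset (ℝ × ℝ))) ?_ ?_ ?_).symm
    · -- maps into the filtered powerset
      rintro ⟨u, v⟩ hp
      rw [hmemE] at hp
      obtain ⟨hun, hvn, hu1, huv, hsep⟩ := hp
      simp only at *
      have hne : vtx n (((k:ℕ) + u : ℕ) : Fin n) ≠ vtx n (((k:ℕ) + v : ℕ) : Fin n) := by
        intro h
        exact absurd (idx_inj u v hun hvn (vtx_inj h)) (by omega)
      rw [Finset.mem_filter, Finset.mem_powersetCard]
      refine ⟨⟨?_, Finset.card_pair hne⟩, ?_⟩
      · intro x hx
        rw [Finset.mem_insert, Finset.mem_singleton] at hx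
        rcases hx with rfl | rfl
        · exact Finset.mem_image_of_mem _ (Finset.mem_erase.2
            ⟨idx_ne u hu1 hun, Finset.mem_univ _⟩)
        · exact Finset.mem_image_of_mem _ (Finset.mem_erase.2
            ⟨idx_ne v (by omega) hvn, Finset.mem_univ _⟩)
      · refine ⟨vtx n (((k:ℕ) + u : ℕ) : Fin n), Finset.mem_insert_self _ _,
          vtx n (((k:ℕ) + v : ℕ) : Fin n), ?_, hne, (sep_char u v hu1 huv hvn).2 hsep⟩
        rw [Finset.mem_insert, Finset.mem_singleton]; right; rfl
    · -- injective
      rintro ⟨u, v⟩ hp ⟨u', v'⟩ hp' h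
      rw [hmemE] at hp hp'
      simp only at *
      rcases finset_pair_eq h with ⟨h1, h2⟩ | ⟨h1, h2⟩
      · have e1 := idx_inj u u' hp.1 hp'.1 (vtx_inj h1)
        have e2 := idx_inj v v' hp.2.1 hp'.2.1 (vtx_inj h2)
        simp [e1, e2]
      · have e1 := idx_inj u v' hp.1 hp'.2.1 (vtx_inj h1)
        have e2 := idx_inj v u' hp.2.1 hp'.1 (vtx_inj h2)
        exfalso
        omega
    · -- surjective
      intro s hs
      rw [Finset.mem_filter, Finset.mem_powersetCard] at hs
      obtain ⟨⟨hsub, hcard2⟩, A, hA, B, hB, hAB, hABsep⟩ := hs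
      obtain ⟨x, y, hxy, rfl⟩ := Finset.card_eq_two.1 hcard2
      -- identify x and y as vertices
      have hx2 : x ∈ ({x,y} : Finset (ℝ×ℝ)) := Finset.mem_insert_self _ _
      have hy2 : y ∈ ({x,y} : Finset (ℝ×ℝ)) := by
        rw [Finset.mem_insert, Finset.mem_singleton]; right; rfl
      obtain ⟨a, ha, rfl⟩ := Finset.mem_image.1 (hsub hx2)
      obtain ⟨b, hb, rfl⟩ := Finset.mem_image.1 (hsub hy2)
      rw [Finset.mem_erase] at ha hb
      have hab : a ≠ b := fun h => hxy (by rw [h])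
      -- the normalized indices
      have hSxy : SepLine (vtx n a) (vtx n b) (vtx n k) (0,0) := by
        rw [Finset.mem_insert, Finset.mem_singleton] at hA hB
        rcases hA with rfl | rfl <;> rcases hB with rfl | rfl
        · exact absurd rfl hAB
        · exact hABsep
        · exact (sepline_swap _ _ _ _).1 hABsep
        · exact absurd rfl hAB
      set ua : Fin n := a - k with hua
      set ub : Fin n := b - k with hub
      have hka : a = (((k:ℕ) + (ua:ℕ) : ℕ) : Fin n) := by
        push_cast [Fin.cast_val_eq_self]
        rw [hua]; ring
      have hkb : b = (((k:ℕ) + (ub:ℕ) : ℕ) : Fin n) := by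
        push_cast [Fin.cast_val_eq_self]
        rw [hub]; ring
      have hua1 : 1 ≤ (ua:ℕ) := by
        have h0 : ua ≠ 0 := sub_ne_zero.2 ha.1
        have : (ua:ℕ) ≠ 0 := fun h => h0 (Fin.ext (by rw [h, Fin.val_zero]))
        omega
      have hub1 : 1 ≤ (ub:ℕ) := by
        have h0 : ub ≠ 0 := sub_ne_zero.2 hb.1
        have : (ub:ℕ) ≠ 0 := fun h => h0 (Fin.ext (by rw [h, Fin.val_zero]))
        omega
      have huane : (ua:ℕ) ≠ (ub:ℕ) := by
        intro h
        apply hab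
        rw [hka, hkb, h]
      rcases lt_or_gt_of_ne huane with hlt | hlt
      · refine ⟨((ua:ℕ), (ub:ℕ)), ?_, ?_⟩
        · rw [hmemE]
          refine ⟨idx_lt ua, idx_lt ub, hua1, hlt, ?_⟩
          apply (sep_char (ua:ℕ) (ub:ℕ) hua1 hlt (idx_lt ub)).1
          rw [← hka, ← hkb]
          exact hSxy
        · simp only
          rw [← hka, ← hkb]
      · refine ⟨((ub:ℕ), (ua:ℕ)), ?_, ?_⟩
        · rw [hmemE]
          refine ⟨idx_lt ub, idx_lt ua, hub1, hlt, ?_⟩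
          apply (sep_char (ub:ℕ) (ua:ℕ) hub1 hlt (idx_lt ua)).1
          rw [← hka, ← hkb]
          exact (sepline_swap _ _ _ _).1 hSxy
        · simp only
          rw [← hka, ← hkb]
          exact Finset.pair_comm _ _
  -- count E
  have hEcard : E.card = ∑ i ∈ Finset.range m, i := by
    rw [Finset.card_eq_sum_card_fiberwise
      (f := Prod.snd) (t := Finset.range n)
      (fun p hp => Finset.mem_range.2 ((hmemE p).1 hp).2.1)]
    have hfiber : ∀ v ∈ Finset.range n, (E.filter (fun p => p.2 = v)).card = v - (m+1) := by
      intro v hv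
      have himg : E.filter (fun p => p.2 = v)
          = (Finset.Ico 1 (v - m)).image (fun u => (u, v)) := by
        ext ⟨p1, p2⟩
        rw [Finset.mem_filter, hmemE, Finset.mem_image]
        constructor
        · rintro ⟨⟨h1, h2, h3, h4, h5⟩, h6⟩
          refine ⟨p1, Finset.mem_Ico.2 ⟨h3, by omega⟩, by simp [h6.symm]⟩
        · rintro ⟨u, hu, h⟩
          rw [Finset.mem_Ico] at hu
          obtain ⟨rfl, rfl⟩ : u = p1 ∧ v = p2 := by
            rw [Prod.mk.injEq] at h; exact h
          rw [Finset.mem_range] at hv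
          refine ⟨⟨by omega, by omega, hu.1, by omega, by omega⟩, rfl⟩
      rw [himg, Finset.card_image_of_injective _ (fun a b hab => congrArg Prod.fst hab),
        Nat.card_Ico]
      omega
    rw [Finset.sum_congr rfl hfiber]
    have hsplit : ∑ v ∈ Finset.range n, (v - (m+1))
        = ∑ v ∈ Finset.Ico (m+1) n, (v - (m+1)) := by
      rw [Finset.range_eq_Ico]
      refine (Finset.sum_subset (Finset.Ico_subset_Ico (by omega) le_rfl) ?_).symm
      intro x hx hnx
      rw [Finset.mem_Ico] at hx hnx
      omega
    rw [hsplit, Finset.sum_Ico_eq_sum_range]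
    have hnm1 : n - (m+1) = m := by omega
    rw [hnm1]
    apply Finset.sum_congr rfl
    intro i _
    omega
  -- final arithmetic
  have h2S : 2 * nsep (ngonWithCenter n) (vtx n k) (0,0) = m * (m-1) := by
    rw [hcard, hEcard, ← Finset.sum_range_id_mul_two m, mul_comm]
  have hmulmod := Nat.mul_mod m (m-1) 4
  obtain ⟨X, hX⟩ : ∃ X, X = m*(m-1) := ⟨_, rfl⟩
  rw [← hX] at h2S hmulmod
  have hmod : nsep (ngonWithCenter n) (vtx n k) (0,0) % 2 = (n/4) % 2 := by
    have hr4 : m % 4 < 4 := Nat.mod_lt _ (by norm_num)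
    set r := m % 4 with hr
    interval_cases r <;> omega
  constructor
  · show (↑(nsep (ngonWithCenter n) (vtx n k) (0,0)) : ℤ) % 2 = (↑(n/4) : ℤ) % 2
    omega
  · rw [Nat.odd_iff]
    omega
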